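/- arXiv:2407.04579 — 2 statements merged into one kernel-verified Lean document; each statement's English description precedes it below -/
import Mathlib

section
/- (Stein's lemma, the one-dimensional tool underlying Stein's unbiased risk estimate.) Let μ ∈ ℝ, σ > 0, and let g : ℝ → ℝ be differentiable. Suppose that the functions x ↦ (x − μ)·g(x) and x ↦ g'(x) are both integrable with respect to the Gaussian measure N(μ, σ²), and that g(x)·φ(x; μ, σ²) → 0 as x → +∞ and as x → −∞. Then ∫ (x − μ)·g(x) dN(μ, σ²)(x) = σ² · ∫ g'(x) dN(μ, σ²)(x). -/
open MeasureTheory ProbabilityTheory Filter Real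
open scoped ENNReal NNReal

lemma stein_hasDerivAt_pdf (μ : ℝ) (σ : ℝ) (hσ : 0 < σ) (x : ℝ) :
    HasDerivAt (gaussianPDFReal μ ⟨σ ^ 2, sq_nonneg σ⟩)
      (-(x - μ) / σ ^ 2 * gaussianPDFReal μ ⟨σ ^ 2, sq_nonneg σ⟩ x) x := by
  have hσ2 : (σ : ℝ) ^ 2 ≠ 0 := by positivity
  have h1 : HasDerivAt (fun y : ℝ => -(y - μ) ^ 2 / (2 * σ ^ 2))
      (-(2 * (x - μ)) / (2 * σ ^ 2)) x := by
    have := (((hasDerivAt_id x).sub_const μ).pow 2).neg.div_const (2 * σ ^ 2)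
    simpa [mul_comm, mul_assoc, mul_left_comm] using this
  have h2 := (h1.exp).const_mul (√(2 * π * σ ^ 2))⁻¹
  have hfun : gaussianPDFReal μ ⟨σ ^ 2, sq_nonneg σ⟩
      = fun y => (√(2 * π * σ ^ 2))⁻¹ * rexp (-(y - μ) ^ 2 / (2 * σ ^ 2)) := by
    funext y
    simp [gaussianPDFReal]
    rfl
  rw [hfun]
  refine h2.congr_deriv ?_
  beta_reduce
  field_simp

lemma stein_gaussianReal_eq (μ : ℝ) (σ : ℝ) (hσ : 0 < σ) :
    gaussianReal μ ⟨σ ^ 2, sq_nonneg σ⟩ =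
      volume.withDensity
        (fun x => ((gaussianPDFReal μ ⟨σ ^ 2, sq_nonneg σ⟩ x).toNNReal : ℝ≥0∞)) := by
  have hv : (⟨σ ^ 2, sq_nonneg σ⟩ : NNReal) ≠ 0 := by
    intro h
    have : σ ^ 2 = 0 := congrArg NNReal.toReal h
    nlinarith
  rw [gaussianReal_of_var_ne_zero _ hv]
  rfl

/-- **Stein's lemma** (one-dimensional). If `g` is differentiable, the functions
`x ↦ (x − μ)·g x` and `g'` are integrable with respect to the Gaussian measure
`N(μ, σ²)`, and `g x · φ(x; μ, σ²) → 0` as `x → ±∞`, then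
`∫ (x − μ)·g x dN(μ,σ²) = σ² · ∫ g' dN(μ,σ²)`. -/
theorem stein_lemma
    (μ : ℝ) (σ : ℝ) (hσ : 0 < σ) (g : ℝ → ℝ) (hg : Differentiable ℝ g)
    (hint₁ : Integrable (fun x => (x - μ) * g x)
      (gaussianReal μ ⟨σ ^ 2, sq_nonneg σ⟩))
    (hint₂ : Integrable (deriv g) (gaussianReal μ ⟨σ ^ 2, sq_nonneg σ⟩))
    (htop : Tendsto (fun x => g x * gaussianPDFReal μ ⟨σ ^ 2, sq_nonneg σ⟩ x)
      atTop (nhds 0))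
    (hbot : Tendsto (fun x => g x * gaussianPDFReal μ ⟨σ ^ 2, sq_nonneg σ⟩ x)
      atBot (nhds 0)) :
    (∫ x, (x - μ) * g x ∂(gaussianReal μ ⟨σ ^ 2, sq_nonneg σ⟩)) =
      σ ^ 2 * ∫ x, deriv g x ∂(gaussianReal μ ⟨σ ^ 2, sq_nonneg σ⟩) := by
  set φ : ℝ → ℝ := gaussianPDFReal μ ⟨σ ^ 2, sq_nonneg σ⟩ with hφ
  have hσ2 : (0 : ℝ) < σ ^ 2 := by positivity
  have hmeas : Measurable fun x => (φ x).toNNReal :=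
    (measurable_gaussianPDFReal μ _).real_toNNReal
  have hcoe : ∀ x, ((φ x).toNNReal : ℝ) = φ x := fun x =>
    Real.coe_toNNReal _ (gaussianPDFReal_nonneg μ _ x)
  have hmeq := stein_gaussianReal_eq μ σ hσ
  -- convert integrability hypotheses to Lebesgue measure
  have hI₁ : Integrable (fun x => φ x * ((x - μ) * g x)) volume := by
    have := hint₁
    rw [hmeq, integrable_withDensity_iff_integrable_smul hmeas] at this
    simpa [hcoe, NNReal.smul_def] using this
  have hI₂ : Integrable (fun x => φ x * deriv g x) volume := by
    have := hint₂
    rw [hmeq, integrable_withDensity_iff_integrable_smul hmeas] at this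
    simpa [hcoe, NNReal.smul_def] using this
  -- derivative of g * φ
  have hderiv : ∀ x, HasDerivAt (fun y => g y * φ y)
      (deriv g x * φ x + g x * (-(x - μ) / σ ^ 2 * φ x)) x := fun x =>
    ((hg x).hasDerivAt).mul (stein_hasDerivAt_pdf μ σ hσ x)
  have hI' : Integrable
      (fun x => deriv g x * φ x + g x * (-(x - μ) / σ ^ 2 * φ x)) volume := by
    have h2 : Integrable (fun x => (-(1 : ℝ) / σ ^ 2) * (φ x * ((x - μ) * g x))) volume :=
      hI₁.const_mul _
    have := (hI₂.add h2)
    apply this.congr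
    filter_upwards with x
    simp only [Pi.add_apply]
    field_simp
  have hzero : (∫ x, (deriv g x * φ x + g x * (-(x - μ) / σ ^ 2 * φ x))) = 0 := by
    have := MeasureTheory.integral_of_hasDerivAt_of_tendsto hderiv hI' hbot htop
    simpa using this
  rw [integral_add (by apply hI₂.congr; filter_upwards with x; ring)
    (by
      have : Integrable (fun x => (-(1 : ℝ) / σ ^ 2) * (φ x * ((x - μ) * g x))) volume :=
        hI₁.const_mul _
      apply this.congr; filter_upwards with x; field_simp)] at hzero
  -- rewrite target integrals
  have hrw : ∀ f : ℝ → ℝ,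
      (∫ x, f x ∂(gaussianReal μ ⟨σ ^ 2, sq_nonneg σ⟩)) = ∫ x, φ x * f x := by
    intro f
    rw [hmeq, integral_withDensity_eq_integral_smul hmeas]
    simp [hcoe, NNReal.smul_def]
  rw [hrw, hrw]
  have e1 : (∫ x, deriv g x * φ x) = ∫ x, φ x * deriv g x := by
    congr 1; ext x; ring
  have e2 : (∫ x, g x * (-(x - μ) / σ ^ 2 * φ x))
      = (-(1 : ℝ) / σ ^ 2) * ∫ x, φ x * ((x - μ) * g x) := by
    rw [← integral_const_mul]
    congr 1; ext x; field_simp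
  rw [e1, e2] at hzero
  have hne : (σ : ℝ) ^ 2 ≠ 0 := hσ2.ne'
  field_simp at hzero ⊢
  linarith
end

section
/- Let N ≥ 3 be an integer, σ₀ > 0, A > 0, and M ∈ ℝ^N. Suppose z is distributed according to the product measure Π_{i=1}^N N(M_i, A + σ₀²) (the marginal distribution of the observations in the normal-normal model). With S(z) = Σ_{i=1}^N (z_i − M_i)², the empirical shrinking-factor correction is unbiased for the Bayes shrinkage: E[(N−2)·σ₀²/S(z)] = σ₀²/(A + σ₀²), and consequently E[1 − (N−2)·σ₀²/S(z)] = A/(A + σ₀²) = B, the Bayes shrinkage factor. -/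
open MeasureTheory ProbabilityTheory Finset
open scoped NNReal ENNReal

section ShrinkAux

open Real Set Filter
open scoped NNReal ENNReal

private lemma shrink_aux_deriv {c p : ℝ} (hc : 0 < c) (hp1 : p + 1 ≠ 0) {x : ℝ} (hx : 0 ≤ x) :
    HasDerivAt (fun t => (1 + c * t) ^ (p + 1) / (c * (p + 1))) ((1 + c * x) ^ p) x := by
  have hpos : (0:ℝ) < 1 + c * x := by nlinarith
  have h1 : HasDerivAt (fun t : ℝ => 1 + c * t) c x := by
    simpa using ((hasDerivAt_id x).const_mul c).const_add 1
  have h2 := (Real.hasDerivAt_rpow_const (p := p + 1) (Or.inl hpos.ne')).comp x h1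
  have h3 := h2.div_const (c * (p + 1))
  refine h3.congr_deriv ?_
  have h1px : (1 + c * x) ^ (p + 1 - 1) = (1 + c * x) ^ p := by norm_num
  rw [h1px, div_eq_iff (mul_ne_zero hc.ne' hp1)]
  ring

private lemma shrink_aux_tendsto {c p : ℝ} (hc : 0 < c) (hp1 : p + 1 < 0) :
    Tendsto (fun t => (1 + c * t) ^ (p + 1) / (c * (p + 1))) atTop (nhds 0) := by
  have h1 : Tendsto (fun t : ℝ => 1 + c * t) atTop atTop :=
    tendsto_atTop_add_const_left _ 1 (tendsto_id.const_mul_atTop hc)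
  have h2 : Tendsto (fun y : ℝ => y ^ (p + 1)) atTop (nhds 0) := by
    simpa [neg_neg] using tendsto_rpow_neg_atTop (by linarith : 0 < -(p + 1))
  simpa using (h2.comp h1).div_const (c * (p + 1))

private lemma shrink_integrableOn_aux {c p : ℝ} (hc : 0 < c) (hp : p < -1) :
    IntegrableOn (fun t : ℝ => (1 + c * t) ^ p) (Ioi 0) :=
  integrableOn_Ioi_deriv_of_nonneg' (fun x hx => shrink_aux_deriv hc (by linarith) hx)
    (fun x hx => rpow_nonneg (by nlinarith [mem_Ioi.mp hx] : (0:ℝ) ≤ 1 + c * x) p)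
    (shrink_aux_tendsto hc (by linarith))

private lemma shrink_integral_aux {c p : ℝ} (hc : 0 < c) (hp : p < -1) :
    ∫ t in Ioi (0:ℝ), (1 + c * t) ^ p = 1 / (c * (-(p + 1))) := by
  rw [integral_Ioi_of_hasDerivAt_of_nonneg' (fun x hx => shrink_aux_deriv hc (by linarith) hx)
    (fun x hx => rpow_nonneg (by nlinarith [mem_Ioi.mp hx] : (0:ℝ) ≤ 1 + c * x) p)
    (shrink_aux_tendsto hc (by linarith))]
  simp only [mul_zero, add_zero, Real.one_rpow]
  rw [zero_sub, ← div_neg]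
  ring_nf

private lemma shrink_gauss_factor {v : ℝ≥0} (hv : 0 < (v:ℝ)) (m t : ℝ) (ht : 0 ≤ t) :
    ∫ x, rexp (-(t * (x - m) ^ 2)) ∂(gaussianReal m v) = (1 + 2 * t * v) ^ (-(1:ℝ)/2) := by
  have hvne : v ≠ 0 := by exact_mod_cast hv.ne'
  have hb : (0:ℝ) < t + (2 * v)⁻¹ := by positivity
  rw [gaussianReal_of_var_ne_zero m hvne]
  have hd : gaussianPDF m v = fun x => ((gaussianPDFReal m v x).toNNReal : ℝ≥0∞) := rfl
  rw [hd, integral_withDensity_eq_integral_smul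
    ((measurable_gaussianPDFReal m v).real_toNNReal) _]
  have heq : ∀ x : ℝ, (gaussianPDFReal m v x).toNNReal • rexp (-(t * (x - m) ^ 2))
      = (√(2 * π * v))⁻¹ * rexp (-((t + (2 * v)⁻¹) * (x - m) ^ 2)) := by
    intro x
    rw [NNReal.smul_def, smul_eq_mul, Real.coe_toNNReal _ (gaussianPDFReal_nonneg m v x),
      gaussianPDFReal]
    rw [mul_assoc, ← Real.exp_add]
    congr 2
    push_cast
    field_simp
    ring
  simp_rw [heq]
  rw [integral_const_mul]
  have hsub : ∫ x : ℝ, rexp (-((t + (2 * v)⁻¹) * (x - m) ^ 2))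
      = ∫ x : ℝ, rexp (-((t + (2 * v)⁻¹) * x ^ 2)) :=
    integral_sub_right_eq_self (fun y => rexp (-((t + (2 * v)⁻¹) * y ^ 2))) m
  rw [hsub]
  simp_rw [← neg_mul]
  rw [integral_gaussian]
  have h1 : (0:ℝ) < 1 + 2 * t * v := by positivity
  rw [show -(1:ℝ)/2 = -(1/2) by norm_num, Real.rpow_neg h1.le, ← Real.sqrt_eq_rpow,
    ← Real.sqrt_inv, ← Real.sqrt_inv (1 + 2 * t * ↑v), ← Real.sqrt_mul (by positivity)]
  congr 1
  push_cast
  have h2 : t + (2 * (v:ℝ))⁻¹ ≠ 0 := by positivity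
  field_simp
  ring

private lemma shrink_pi_integral_prod {N : ℕ} (μ : Fin N → Measure ℝ)
    (hμ : ∀ i, SigmaFinite (μ i)) (f : Fin N → ℝ → ℝ) :
    ∫ x : Fin N → ℝ, ∏ i, f i (x i) ∂(Measure.pi μ) = ∏ i, ∫ x, f i x ∂(μ i) :=
  MeasureTheory.integral_fintype_prod_eq_prod (𝕜 := ℝ) (E := fun _ => ℝ) f (μ := μ)

private lemma shrink_pi_integrable_prod {N : ℕ} (μ : Fin N → Measure ℝ)
    (hμ : ∀ i, SigmaFinite (μ i))
    {f : Fin N → ℝ → ℝ} (hf : ∀ i, Integrable (f i) (μ i)) :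
    Integrable (fun x : Fin N → ℝ => ∏ i, f i (x i)) (Measure.pi μ) :=
  MeasureTheory.Integrable.fintype_prod_dep (𝕜 := ℝ) (E := fun _ => ℝ) (μ := μ) hf

private lemma shrink_laplace_one_div {s : ℝ} (hs : 0 < s) :
    ∫ t in Ioi (0:ℝ), rexp (-(t * s)) = 1 / s := by
  rw [integral_comp_mul_right_Ioi (fun u => rexp (-u)) 0 hs]
  simp [integral_exp_neg_Ioi, integral_exp_Iic_zero, one_div]

private lemma shrink_laplace_integrableOn {s : ℝ} (hs : 0 < s) :
    IntegrableOn (fun t : ℝ => rexp (-(t * s))) (Ioi 0) := by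
  simpa [mul_comm] using exp_neg_integrableOn_Ioi 0 hs

end ShrinkAux

/-- **Unbiasedness of the empirical shrinking-factor correction.** For `N ≥ 3`, when
`z ~ Π N(M i, A + σ₀²)` (the marginal distribution of the observations in the
normal-normal model) and `S(z) = Σ (z i − M i)²`, we have
`E[(N−2)·σ₀²/S(z)] = σ₀²/(A + σ₀²)`, hence
`E[1 − (N−2)·σ₀²/S(z)] = A/(A + σ₀²)`, the Bayes shrinkage factor. -/
theorem shrinking_factor_unbiased
    (N : ℕ) (hN : 3 ≤ N) (σ₀ A : ℝ) (hσ₀ : 0 < σ₀) (hA : 0 < A) (M : Fin N → ℝ)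
    (P : Measure (Fin N → ℝ))
    (hP : P = Measure.pi fun i =>
      gaussianReal (M i) ⟨A + σ₀ ^ 2, by positivity⟩)
    (S : (Fin N → ℝ) → ℝ) (hS : ∀ z, S z = ∑ i, (z i - M i) ^ 2) :
    (∫ z, (N - 2) * σ₀ ^ 2 / S z ∂P) = σ₀ ^ 2 / (A + σ₀ ^ 2) ∧
      (∫ z, 1 - (N - 2) * σ₀ ^ 2 / S z ∂P) = A / (A + σ₀ ^ 2) := by
  classical
  subst hP
  set v : ℝ≥0 := ⟨A + σ₀ ^ 2, by positivity⟩ with hv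
  set P : Measure (Fin N → ℝ) := Measure.pi fun i => gaussianReal (M i) v with hPdef
  have hVpos : (0:ℝ) < A + σ₀ ^ 2 := by positivity
  have hvR : (0:ℝ) < (v:ℝ) := hVpos
  have hvco : ((v:ℝ)) = A + σ₀ ^ 2 := rfl
  have hvne : v ≠ 0 := by exact_mod_cast hvR.ne'
  have hN2 : (2:ℝ) < (N:ℝ) := by exact_mod_cast Nat.lt_of_lt_of_le (by norm_num) hN
  have hNne : (N:ℝ) - 2 ≠ 0 := by linarith
  haveI : IsProbabilityMeasure P := by
    rw [hPdef]; infer_instance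
  have hSm : Measurable S := by
    have : S = fun z => ∑ i, (z i - M i) ^ 2 := funext hS
    rw [this]
    exact Finset.measurable_sum _ fun i _ => ((measurable_pi_apply i).sub_const _).pow_const 2
  have hS0 : ∀ z, 0 ≤ S z := fun z => by rw [hS]; positivity
  -- S is a.e. positive
  have hae : ∀ᵐ z ∂P, 0 < S z := by
    rw [MeasureTheory.ae_iff]
    refine measure_mono_null (t := Set.pi Set.univ fun i => ({M i} : Set ℝ)) ?_ ?_
    · intro z hz
      simp only [Set.mem_setOf_eq, not_lt] at hz
      have hz0 : S z = 0 := le_antisymm hz (hS0 z)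
      rw [hS] at hz0
      intro i _
      have := (Finset.sum_eq_zero_iff_of_nonneg (fun j _ => sq_nonneg (z j - M j))).mp hz0 i
        (Finset.mem_univ i)
      have : z i - M i = 0 := by
        have := this
        nlinarith [sq_nonneg (z i - M i)]
      simp only [Set.mem_singleton_iff]
      linarith
    · rw [hPdef, Measure.pi_pi]
      apply Finset.prod_eq_zero (Finset.mem_univ (⟨0, by omega⟩ : Fin N))
      exact (gaussianReal_absolutelyContinuous _ hvne) (measure_singleton _)
  -- the main lintegral computation
  have key : ∫⁻ z, ENNReal.ofReal (1 / S z) ∂P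
      = ENNReal.ofReal (1 / ((A + σ₀ ^ 2) * ((N:ℝ) - 2))) := by
    have h1 : ∫⁻ z, ENNReal.ofReal (1 / S z) ∂P
        = ∫⁻ z, ∫⁻ t in Set.Ioi (0:ℝ), ENNReal.ofReal (Real.exp (-(t * S z))) ∂volume ∂P := by
      refine lintegral_congr_ae ?_
      filter_upwards [hae] with z hz
      rw [← ofReal_integral_eq_lintegral_ofReal (shrink_laplace_integrableOn hz)
        (Filter.Eventually.of_forall fun t => (Real.exp_pos _).le), shrink_laplace_one_div hz]
    have h2 : ∫⁻ z, ∫⁻ t in Set.Ioi (0:ℝ), ENNReal.ofReal (Real.exp (-(t * S z))) ∂volume ∂P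
        = ∫⁻ t in Set.Ioi (0:ℝ), ∫⁻ z, ENNReal.ofReal (Real.exp (-(t * S z))) ∂P ∂volume := by
      refine lintegral_lintegral_swap ?_
      exact (((measurable_snd.mul (hSm.comp measurable_fst)).neg.exp).ennreal_ofReal).aemeasurable
    have h3 : ∀ t : ℝ, t ∈ Set.Ioi (0:ℝ) →
        ∫⁻ z, ENNReal.ofReal (Real.exp (-(t * S z))) ∂P
          = ENNReal.ofReal ((1 + (2 * (A + σ₀ ^ 2)) * t) ^ (-(N:ℝ)/2)) := by
      intro t ht
      have ht' : 0 ≤ t := (Set.mem_Ioi.mp ht).le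
      have hrw : ∀ z : Fin N → ℝ, Real.exp (-(t * S z))
          = ∏ i, Real.exp (-(t * (z i - M i) ^ 2)) := by
        intro z
        rw [hS, Finset.mul_sum, ← Finset.sum_neg_distrib, Real.exp_sum]
      have hint : ∀ i : Fin N,
          Integrable (fun x => Real.exp (-(t * (x - M i) ^ 2))) (gaussianReal (M i) v) := by
        intro i
        refine (integrable_const (1:ℝ)).mono' ?_ (Filter.Eventually.of_forall fun x => ?_)
        · exact ((((measurable_id.sub_const _).pow_const 2).const_mul t).neg.exp)
            |>.aestronglyMeasurable
        · rw [Real.norm_eq_abs, Real.abs_exp]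
          exact Real.exp_le_one_iff.mpr (neg_nonpos.mpr (by positivity))
      simp_rw [hrw]
      rw [← ofReal_integral_eq_lintegral_ofReal
        (shrink_pi_integrable_prod _ (fun i => inferInstance) hint)
        (Filter.Eventually.of_forall fun z =>
          Finset.prod_nonneg fun i _ => (Real.exp_pos _).le)]
      rw [shrink_pi_integral_prod _ (fun i => inferInstance) (fun i x => Real.exp (-(t * (x - M i) ^ 2)))]
      congr 1
      have hfac : ∀ i : Fin N, ∫ x, Real.exp (-(t * (x - M i) ^ 2)) ∂(gaussianReal (M i) v)
          = (1 + 2 * t * (v:ℝ)) ^ (-(1:ℝ)/2) := fun i => shrink_gauss_factor hvR (M i) t ht'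
      rw [Finset.prod_congr rfl fun i _ => hfac i, Finset.prod_const, Finset.card_univ,
        Fintype.card_fin]
      have hpos : (0:ℝ) < 1 + 2 * t * (v:ℝ) := by positivity
      rw [← Real.rpow_natCast ((1 + 2 * t * (v:ℝ)) ^ (-(1:ℝ)/2)) N, ← Real.rpow_mul hpos.le]
      rw [hvco]
      have hbase : (1:ℝ) + 2 * t * (A + σ₀ ^ 2) = 1 + (2 * (A + σ₀ ^ 2)) * t := by ring
      have hexp : (-(1:ℝ)/2) * (N:ℝ) = -(N:ℝ)/2 := by ring
      rw [hbase, hexp]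
    rw [h1, h2, setLIntegral_congr_fun measurableSet_Ioi h3]
    have hc : (0:ℝ) < 2 * (A + σ₀ ^ 2) := by positivity
    have hp : -(N:ℝ)/2 < -1 := by
      rw [div_lt_iff₀ (by norm_num : (0:ℝ) < 2)]
      linarith
    rw [← ofReal_integral_eq_lintegral_ofReal (shrink_integrableOn_aux hc hp) ?_]
    · rw [shrink_integral_aux hc hp]
      congr 1
      have : -(-(N:ℝ)/2 + 1) = (N:ℝ)/2 - 1 := by ring
      rw [this]
      congr 1
      ring
    · filter_upwards [ae_restrict_mem measurableSet_Ioi] with x hx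
      have : (0:ℝ) ≤ 1 + 2 * (A + σ₀ ^ 2) * x := by nlinarith [Set.mem_Ioi.mp hx]
      exact Real.rpow_nonneg this _
  -- integrability and value of ∫ 1/S
  have hg0 : ∀ z, 0 ≤ 1 / S z := fun z => one_div_nonneg.mpr (hS0 z)
  have hgm : Measurable fun z => 1 / S z := measurable_const.div hSm
  have hInt : Integrable (fun z => 1 / S z) P := by
    refine ⟨hgm.aestronglyMeasurable, ?_⟩
    rw [hasFiniteIntegral_iff_ofReal (Filter.Eventually.of_forall hg0), key]
    exact ENNReal.ofReal_lt_top
  have hval : ∫ z, 1 / S z ∂P = 1 / ((A + σ₀ ^ 2) * ((N:ℝ) - 2)) := by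
    rw [integral_eq_lintegral_of_nonneg_ae (Filter.Eventually.of_forall hg0)
      hgm.aestronglyMeasurable, key, ENNReal.toReal_ofReal (le_of_lt (one_div_pos.mpr (by nlinarith)))]
  have hfun : (fun z => ((N:ℝ) - 2) * σ₀ ^ 2 / S z)
      = fun z => (((N:ℝ) - 2) * σ₀ ^ 2) * (1 / S z) := funext fun z => (mul_one_div _ _).symm
  have hfirst : (∫ z, ((N:ℝ) - 2) * σ₀ ^ 2 / S z ∂P) = σ₀ ^ 2 / (A + σ₀ ^ 2) := by
    rw [hfun, MeasureTheory.integral_const_mul, hval]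
    field_simp
  refine ⟨hfirst, ?_⟩
  have hIntf : Integrable (fun z => ((N:ℝ) - 2) * σ₀ ^ 2 / S z) P := by
    rw [hfun]; exact hInt.const_mul _
  rw [integral_sub (integrable_const 1) hIntf, hfirst, integral_const, probReal_univ]
  simp only [ENNReal.toReal_one, smul_eq_mul, mul_one, one_mul]
  field_simp
  ring
end
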